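/- Let S be a group, n a positive integer, and T a subgroup of Sym(Fin n). Let L and L' be subgroups of S that are not conjugate in S (there is no g ∈ S with g⁻¹Lg = L'). Then the subgroups L ≀ T and L' ≀ T of the wreath product S ≀ T = (Fin n → S) ⋊ T are not conjugate in S ≀ T. -/

import Mathlib

/-- The coordinate-permutation action of `Equiv.Perm α` on `α → S`:
`(σ • f) i = f (σ⁻¹ i)`. -/
def permMulAut (S : Type*) [Group S] (α : Type*) : Equiv.Perm α →* MulAut (α → S) where
  toFun σ :=
    { toFun := fun f => f ∘ σ.symm
      invFun := fun f => f ∘ σ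
      left_inv := fun f => by ext i; simp
      right_inv := fun f => by ext i; simp
      map_mul' := fun f g => rfl }
  map_one' := by ext f i; rfl
  map_mul' := fun σ τ => by ext f i; rfl

/-- The wreath product `S ≀ T` for `T` a subgroup of `Equiv.Perm α`, i.e. the semidirect
product `(α → S) ⋊ T` where `T` permutes coordinates. -/
def Wreath (S : Type*) [Group S] {α : Type*} (T : Subgroup (Equiv.Perm α)) : Type _ :=
  (α → S) ⋊[(permMulAut S α).comp T.subtype] T

instance (S : Type*) [Group S] {α : Type*} (T : Subgroup (Equiv.Perm α)) :
    Group (Wreath S T) :=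
  inferInstanceAs (Group ((α → S) ⋊[(permMulAut S α).comp T.subtype] T))

/-- The subgroup `L ≀ T` of `S ≀ T`: pairs `(f, t)` with all values of `f` in `L`. -/
def wreathSub {S : Type*} [Group S] {α : Type*} (L : Subgroup S)
    (T : Subgroup (Equiv.Perm α)) : Subgroup (Wreath S T) where
  carrier := {g : (α → S) ⋊[(permMulAut S α).comp T.subtype] T | ∀ i, g.left i ∈ L}
  one_mem' := fun i => by
    show (1 : (α → S) ⋊[(permMulAut S α).comp T.subtype] T).left i ∈ L
    simpa using one_mem L
  mul_mem' := by
    intro a b ha hb i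
    show (a * b).left i ∈ L
    erw [SemidirectProduct.mul_left]
    exact mul_mem (ha i) (hb _)
  inv_mem' := by
    intro a ha i
    show (a⁻¹).left i ∈ L
    erw [SemidirectProduct.inv_left]
    exact inv_mem (ha _)

lemma wreath_conj_left {S : Type*} [Group S] {α : Type*} (T : Subgroup (Equiv.Perm α))
    (w : (α → S) ⋊[(permMulAut S α).comp T.subtype] T) (a : α → S) (i : α) :
    ((w * ⟨a, 1⟩ * w⁻¹)).left i
      = w.left i * a (((w.right : Equiv.Perm α))⁻¹ i) * (w.left i)⁻¹ := by
  rw [SemidirectProduct.mul_left, SemidirectProduct.mul_left, SemidirectProduct.inv_left, SemidirectProduct.mul_right]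
  simp [SemidirectProduct.mul_left, SemidirectProduct.inv_left, SemidirectProduct.mul_right,
    permMulAut, mul_assoc, Equiv.Perm.inv_def, Equiv.symm_apply_apply, Equiv.apply_symm_apply,
    -SemidirectProduct.mk_eq_inl_mul_inr]

/-- If `L` and `L'` are non-conjugate subgroups of `S`, then `L ≀ T` and `L' ≀ T` are
non-conjugate subgroups of the wreath product `S ≀ T`. -/
theorem wreathSub_not_conjugate {S : Type*} [Group S] (L L' : Subgroup S)
    (n : ℕ) (hn : 0 < n) (T : Subgroup (Equiv.Perm (Fin n)))
    (hnc : ¬ ∃ g : S, Subgroup.map (MulAut.conj g).toMonoidHom L = L') :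
    ¬ ∃ w : Wreath S T,
        Subgroup.map (MulAut.conj w).toMonoidHom (wreathSub L T) = wreathSub L' T := by
  rintro ⟨w, hw⟩
  apply hnc
  set i₀ : Fin n := ⟨0, hn⟩
  refine ⟨w.left i₀, ?_⟩
  ext s'
  simp only [Subgroup.mem_map, MulEquiv.coe_toMonoidHom, MulAut.conj_apply]
  constructor
  · rintro ⟨s, hs, rfl⟩
    have hx : (⟨fun _ => s, 1⟩ : Wreath S T) ∈ wreathSub L T := fun i => hs
    have hmem : w * ⟨fun _ => s, 1⟩ * w⁻¹ ∈ wreathSub L' T := by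
      rw [← hw]
      exact ⟨⟨fun _ => s, 1⟩, hx, rfl⟩
    have h := hmem i₀
    erw [wreath_conj_left T w (fun _ => s) i₀] at h; exact h
  · intro hs'
    have hc : (⟨fun _ => s', 1⟩ : Wreath S T) ∈ wreathSub L' T := fun i => hs'
    rw [← hw] at hc
    obtain ⟨y, hy, hyc⟩ := hc
    simp only [MulEquiv.coe_toMonoidHom, MulAut.conj_apply] at hyc
    have hyr : y.right = 1 := by
      have := congrArg SemidirectProduct.right hyc
      simp only [SemidirectProduct.mul_right, SemidirectProduct.inv_right] at this
      have h2 : w.right * y.right * w.right⁻¹ = 1 := this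
      group at h2
      simpa using h2
    have hyeq : y = (⟨y.left, 1⟩ : Wreath S T) := by
      cases y with
      | mk l r => simp only at hyr; rw [hyr]
    rw [hyeq] at hyc
    have h := congrFun (congrArg SemidirectProduct.left hyc) i₀
    erw [wreath_conj_left T w y.left i₀] at h
    exact ⟨y.left (((w.right : Equiv.Perm (Fin n)))⁻¹ i₀), hy _, h⟩
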